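/- Let n ≥ 2, let A = diag(a₁,…,aₙ) be a real diagonal matrix, and let S = (s_{ij}) be a real symmetric n×n matrix. If for each i one can write a_i = Σ_{j=1}^n t_{ij} with t_{ij} > 0 and t_{ij}·t_{ji} > s_{ij}² for all j, then A + S is positive definite. -/

import Mathlib

open Matrix

/-- Let n ≥ 2, A = diag(a₁,…,aₙ) real diagonal, S real symmetric.  If each a_i = Σ_j t_{ij}
with t_{ij} > 0 and t_{ij}·t_{ji} > s_{ij}² for all j, then A + S is positive definite. -/
theorem diagonal_add_symm_posDef
    (n : ℕ) (hn : 2 ≤ n) (a : Fin n → ℝ) (S : Matrix (Fin n) (Fin n) ℝ)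
    (hS : S.IsSymm) (t : Fin n → Fin n → ℝ)
    (ha : ∀ i, a i = ∑ j, t i j)
    (ht : ∀ i j, 0 < t i j)
    (hts : ∀ i j, S i j ^ 2 < t i j * t j i) :
    (Matrix.diagonal a + S).PosDef := by
  rw [Matrix.posDef_iff_dotProduct_mulVec]
  constructor
  · show (Matrix.diagonal a + S)ᴴ = Matrix.diagonal a + S
    have : (Matrix.diagonal a + S)ᵀ = Matrix.diagonal a + S := by
      rw [Matrix.transpose_add, Matrix.diagonal_transpose, hS]
    simpa using this
  · intro x hx
    obtain ⟨i₀, hi₀⟩ : ∃ i, x i ≠ 0 := Function.ne_iff.mp hx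
    set g : Fin n → Fin n → ℝ := fun i j =>
      (t i j * x i ^ 2 + t j i * x j ^ 2) / 2 + S i j * x i * x j with hg
    have hgnn : ∀ i j, 0 ≤ g i j := by
      intro i j
      have h1 := ht i j
      have h2 := ht j i
      have h3 := hts i j
      have h4 := sq_nonneg (t i j * x i + S i j * x j)
      have h5 := sq_nonneg (x j)
      simp only [hg]
      nlinarith [mul_nonneg (le_of_lt (mul_pos h1 h2)) h5,
        mul_nonneg (sq_nonneg (S i j)) h5]
    have hgpos : 0 < g i₀ i₀ := by
      have h1 := ht i₀ i₀
      have h3 := hts i₀ i₀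
      have h5 : 0 < x i₀ ^ 2 := by positivity
      have hpos : 0 < t i₀ i₀ + S i₀ i₀ := by nlinarith
      simp only [hg]
      nlinarith [mul_pos hpos h5]
    have hsum : 0 < ∑ i, ∑ j, g i j := by
      apply Finset.sum_pos'
      · intro i _
        exact Finset.sum_nonneg fun j _ => hgnn i j
      · exact ⟨i₀, Finset.mem_univ _,
          Finset.sum_pos' (fun j _ => hgnn i₀ j) ⟨i₀, Finset.mem_univ _, hgpos⟩⟩
    have hcomm : ∑ i, ∑ j, t j i * x j ^ 2 = ∑ i, ∑ j, t i j * x i ^ 2 :=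
      Finset.sum_comm
    have hQ : star x ⬝ᵥ ((Matrix.diagonal a + S) *ᵥ x)
        = ∑ i, (a i * x i ^ 2 + ∑ j, S i j * x i * x j) := by
      simp only [star_trivial, dotProduct, mulVec, dotProduct, Matrix.add_apply,
        Matrix.diagonal_apply, add_mul, ite_mul, zero_mul, Finset.sum_add_distrib,
        Finset.mul_sum, Finset.sum_ite_eq, Finset.mem_univ, if_true]
      rw [← Finset.sum_add_distrib]
      refine Finset.sum_congr rfl fun i _ => ?_
      rw [mul_add, Finset.mul_sum]
      congr 1
      · ring
      · exact Finset.sum_congr rfl fun j _ => by ring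
    have hQ2 : ∑ i, (a i * x i ^ 2 + ∑ j, S i j * x i * x j)
        = ∑ i, ∑ j, (t i j * x i ^ 2 + S i j * x i * x j) := by
      refine Finset.sum_congr rfl fun i _ => ?_
      rw [ha i, Finset.sum_mul, ← Finset.sum_add_distrib]
    have heq : ∑ i, ∑ j, (t i j * x i ^ 2 + S i j * x i * x j) = ∑ i, ∑ j, g i j := by
      simp only [hg, Finset.sum_add_distrib, ← Finset.sum_div]
      linarith [hcomm]
    rw [hQ, hQ2, heq]
    exact hsum
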